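/- A continuous bounded function u on an open disk D_r(z₀) ⊆ ℂ that satisfies the mean value property on every closed subdisk, i.e. u(z) = (1/2π)∫₀^{2π} u(z + ρe^{iθ}) dθ whenever the closed disk of radius ρ about z lies in D_r(z₀), is harmonic on D_r(z₀). -/

import Mathlib

open Complex Real MeasureTheory Metric

noncomputable def laplacian (u : ℂ → ℝ) (z : ℂ) : ℝ :=
  fderiv ℝ (fun w => fderiv ℝ u w 1) z 1 + fderiv ℝ (fun w => fderiv ℝ u w Complex.I) z Complex.I

def HarmonicOnSet (u : ℂ → ℝ) (D : Set ℂ) : Prop :=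
  ContDiffOn ℝ 2 u D ∧ ∀ z ∈ D, laplacian u z = 0

noncomputable def poissonKernel' (z ζ : ℂ) : ℝ :=
  (1 - ‖z‖ ^ 2) / ‖z - ζ‖ ^ 2

noncomputable def circInt (g : ℂ → ℝ) : ℝ :=
  ∫ θ in (0:ℝ)..(2 * Real.pi), g (Complex.exp (θ * Complex.I))


open Set

section helpers

lemma clm_decomp {F : Type*} [NormedAddCommGroup F] [NormedSpace ℝ F]
    (L : ℂ →L[ℝ] F) (z : ℂ) : L z = z.re • L 1 + z.im • L Complex.I := by
  have hz : z = z.re • (1:ℂ) + z.im • Complex.I := by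
    apply Complex.ext <;> simp
  rw [← L.map_smul, ← L.map_smul, ← L.map_add, ← hz]

lemma re_rexp (ρ θ : ℝ) : ((ρ:ℂ) * Complex.exp (θ * Complex.I)).re = ρ * Real.cos θ := by
  simp [Complex.exp_ofReal_mul_I_re, Complex.mul_re, Complex.exp_ofReal_mul_I_im]

lemma im_rexp (ρ θ : ℝ) : ((ρ:ℂ) * Complex.exp (θ * Complex.I)).im = ρ * Real.sin θ := by
  simp [Complex.exp_ofReal_mul_I_re, Complex.mul_im, Complex.exp_ofReal_mul_I_im]

lemma abs_rexp (ρ θ : ℝ) (hρ : 0 ≤ ρ) : ‖(ρ:ℂ) * Complex.exp (θ * Complex.I)‖ = ρ := by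
  rw [norm_mul, Complex.norm_real, Complex.norm_exp_ofReal_mul_I, mul_one, Real.norm_eq_abs, _root_.abs_of_nonneg hρ]

lemma integral_cos_mul_sin : (∫ θ in (0:ℝ)..(2*π), Real.cos θ * Real.sin θ) = 0 := by
  have h : ∀ θ, Real.cos θ * Real.sin θ = Real.sin θ * Real.cos θ := fun θ => mul_comm _ _
  simp_rw [h]
  rw [integral_sin_mul_cos₁]
  simp

end helpers


section taylor

lemma taylor2_est (V : ℂ → ℝ) (D1 : ℂ → ℂ →L[ℝ] ℝ) (D2 : ℂ → ℂ →L[ℝ] ℂ →L[ℝ] ℝ)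
    (hfd1 : ∀ y, HasFDerivAt V (D1 y) y) (hfd2 : ∀ y, HasFDerivAt D1 (D2 y) y)
    (w e : ℂ) (η ρ δ₁ : ℝ) (hρpos : 0 < ρ) (hρ1 : ρ < δ₁) (hnorme : ‖e‖ = ρ)
    (hη : 0 ≤ η) (hcont2 : ∀ y : ℂ, dist y w < δ₁ → ‖D2 y - D2 w‖ ≤ η) :
    |V (w+e) - V w - D1 w e - (1/2) * (D2 w e e)| ≤ η * ρ^2 := by
  set K := D2 w e e with hK
  set f : ℝ → ℝ := fun t => V (w + t•e) - V w - t * (D1 w e) - (t^2/2) * K with hf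
  set f' : ℝ → ℝ := fun t => D1 (w + t•e) e - D1 w e - t * K with hf'
  set f'' : ℝ → ℝ := fun t => D2 (w + t•e) e e - K with hf''
  have hline : ∀ t : ℝ, HasDerivAt (fun s : ℝ => w + s•e) e t := by
    intro t
    have := ((hasDerivAt_id t).smul_const e).const_add w
    simpa using this
  have hd1 : ∀ t : ℝ, HasDerivAt f (f' t) t := by
    intro t
    have hA : HasDerivAt (fun s : ℝ => V (w + s•e)) (D1 (w + t•e) e) t :=
      (hfd1 (w + t•e)).comp_hasDerivAt t (hline t)
    have hB : HasDerivAt (fun s : ℝ => s * (D1 w e)) (D1 w e) t := by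
      simpa using (hasDerivAt_id t).mul_const (D1 w e)
    have hC : HasDerivAt (fun s : ℝ => (s^2/2) * K) (t * K) t := by
      have := ((hasDerivAt_pow 2 t).div_const 2).mul_const K
      refine this.congr_deriv ?_
      push_cast; ring
    simpa [hf, hf', Pi.sub_def] using ((hA.sub_const (V w)).sub hB).sub hC
  have hd2 : ∀ t : ℝ, HasDerivAt f' (f'' t) t := by
    intro t
    have hA : HasDerivAt (fun s : ℝ => D1 (w + s•e)) (D2 (w + t•e) e) t :=
      (hfd2 (w + t•e)).comp_hasDerivAt t (hline t)
    have hA' : HasDerivAt (fun s : ℝ => D1 (w + s•e) e) (D2 (w + t•e) e e) t :=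
      (ContinuousLinearMap.apply ℝ ℝ e).hasFDerivAt.comp_hasDerivAt t hA
    have hC : HasDerivAt (fun s : ℝ => s * K) K t := by
      simpa using (hasDerivAt_id t).mul_const K
    simpa [hf', hf'', Pi.sub_def] using ((hA'.sub_const (D1 w e)).sub hC)
  have hf0 : f 0 = 0 := by simp [hf]
  have hf'0 : f' 0 = 0 := by simp [hf']
  obtain ⟨t₁, ht₁, hs1⟩ := exists_hasDerivAt_eq_slope f f' one_pos
    (fun t _ => (hd1 t).continuousAt.continuousWithinAt)
    (fun t _ => hd1 t)
  obtain ⟨t₂, ht₂, hs2⟩ := exists_hasDerivAt_eq_slope f' f'' ht₁.1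
    (fun t _ => (hd2 t).continuousAt.continuousWithinAt)
    (fun t _ => hd2 t)
  rw [hf0] at hs1
  rw [hf'0] at hs2
  have h1 : f 1 = f' t₁ := by rw [hs1]; simp
  have h2 : f' t₁ = t₁ * f'' t₂ := by
    rw [hs2, sub_zero, sub_zero, mul_comm, div_mul_cancel₀ _ (ne_of_gt ht₁.1)]
  have hbound : |f'' t₂| ≤ η * ρ^2 := by
    have hdist : dist (w + t₂•e) w < δ₁ := by
      have hn : ‖t₂ • e‖ = t₂ * ρ := by
        rw [norm_smul, hnorme, Real.norm_eq_abs, abs_of_pos ht₂.1]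
      rw [dist_eq_norm]
      simp only [add_sub_cancel_left]
      rw [hn]
      nlinarith [ht₂.2, ht₁.2, hρpos, hρ1]
    have hop : ‖(D2 (w + t₂•e) - D2 w) e e‖ ≤ ‖D2 (w + t₂•e) - D2 w‖ * ‖e‖ * ‖e‖ := by
      calc ‖(D2 (w + t₂•e) - D2 w) e e‖
          ≤ ‖(D2 (w + t₂•e) - D2 w) e‖ * ‖e‖ := ((D2 (w + t₂•e) - D2 w) e).le_opNorm e
        _ ≤ ‖D2 (w + t₂•e) - D2 w‖ * ‖e‖ * ‖e‖ := by
            gcongr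
            exact (D2 (w + t₂•e) - D2 w).le_opNorm e
    have heq : f'' t₂ = (D2 (w + t₂•e) - D2 w) e e := by
      simp only [hf'', hK, ContinuousLinearMap.sub_apply, ContinuousLinearMap.coe_sub',
        Pi.sub_apply]
    rw [heq]
    calc |(D2 (w + t₂•e) - D2 w) e e| ≤ ‖D2 (w + t₂•e) - D2 w‖ * ‖e‖ * ‖e‖ := hop
      _ ≤ η * ρ^2 := by
          rw [hnorme]
          have := hcont2 _ hdist
          nlinarith [hρpos.le]
  have hfinal : |f 1| ≤ η * ρ^2 := by
    rw [h1, h2, abs_mul]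
    have ht₁1 : |t₁| ≤ 1 := by
      rw [abs_of_pos ht₁.1]; exact ht₁.2.le
    calc |t₁| * |f'' t₂| ≤ 1 * (η * ρ^2) := by
          apply mul_le_mul ht₁1 hbound (abs_nonneg _) zero_le_one
      _ = η * ρ^2 := one_mul _
  have hfe : f 1 = V (w+e) - V w - D1 w e - (1/2) * (D2 w e e) := by
    simp only [hf, hK, one_smul, one_pow, one_mul]
  rwa [hfe] at hfinal

end taylor

section stepB


variable (V : ℂ → ℝ)

lemma lap_zero (hV : ContDiff ℝ 3 V) (w : ℂ) (δ : ℝ) (hδ : 0 < δ)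
    (hmv : ∀ ρ : ℝ, 0 < ρ → ρ ≤ δ →
      (∫ θ in (0:ℝ)..(2*π), V (w + ρ * Complex.exp (θ * Complex.I))) = 2*π * V w) :
    laplacian V w = 0 := by
  have hVdiff : Differentiable ℝ V := hV.differentiable (by norm_num)
  set D1 := fderiv ℝ V with hD1def
  have hD1 : ContDiff ℝ 2 D1 := hV.fderiv_right (by norm_num)
  set D2 := fderiv ℝ D1 with hD2def
  have hD1diff : Differentiable ℝ D1 := hD1.differentiable (by norm_num)
  have hD2cont : Continuous D2 := hD1.continuous_fderiv (by norm_num)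
  -- identify laplacian
  have hlap : laplacian V w = D2 w 1 1 + D2 w Complex.I Complex.I := by
    have h1 : ∀ e : ℂ, fderiv ℝ (fun y => fderiv ℝ V y e) w = (D2 w).flip e := by
      intro e
      have heval : ∀ y : ℂ, fderiv ℝ V y e = (ContinuousLinearMap.apply ℝ ℝ e) (D1 y) := by
        intro y; rfl
      have := ((ContinuousLinearMap.apply ℝ ℝ e).hasFDerivAt.comp w
        (hD1diff w).hasFDerivAt)
      have h2 := this.fderiv
      calc fderiv ℝ (fun y => fderiv ℝ V y e) w
          = fderiv ℝ ((ContinuousLinearMap.apply ℝ ℝ e) ∘ D1) w := by rfl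
        _ = (ContinuousLinearMap.apply ℝ ℝ e).comp (D2 w) := h2
        _ = (D2 w).flip e := by ext x; rfl
    unfold laplacian
    rw [h1 1, h1 Complex.I]
    rfl
  rw [hlap]
  set X := D2 w 1 1 + D2 w Complex.I Complex.I with hX
  have key : ∀ η : ℝ, 0 < η → |X| ≤ η := by
    intro η hη
    -- continuity of D2 at w
    obtain ⟨δ₁, hδ₁, hcont2⟩ : ∃ δ₁ > 0, ∀ y : ℂ, dist y w < δ₁ →
        ‖D2 y - D2 w‖ < η/4 := by
      have := (Metric.continuousAt_iff (f := D2) (a := w)).1 (hD2cont.continuousAt (x := w)) (η/4) (by positivity)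
      obtain ⟨d, hd, h⟩ := this
      exact ⟨d, hd, fun y hy => by
        have := h hy; exact (dist_eq_norm (D2 y) (D2 w)).symm ▸ this⟩
    set ρ := min δ (δ₁/2) with hρdef
    have hρpos : 0 < ρ := lt_min hδ (by positivity)
    have hρδ : ρ ≤ δ := min_le_left _ _
    have hρ1 : ρ < δ₁ := lt_of_le_of_lt (min_le_right _ _) (by linarith)
    -- Taylor estimate
    have hTaylor : ∀ e : ℂ, ‖e‖ = ρ →
        |V (w+e) - V w - D1 w e - (1/2) * (D2 w e e)| ≤ (η/4) * ρ^2 := by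
      intro e he
      exact taylor2_est V D1 D2 (fun y => (hVdiff y).hasFDerivAt)
        (fun y => (hD1diff y).hasFDerivAt) w e (η/4) ρ δ₁ hρpos hρ1
        he (by positivity)
        (fun y hy => (hcont2 y hy).le)
    -- the circle integral computation
    set p1 := D1 w 1 with hp1
    set q1 := D1 w Complex.I with hq1
    set a₁ := D2 w 1 1 with ha₁
    set b₁ := D2 w 1 Complex.I with hb₁
    set b₂ := D2 w Complex.I 1 with hb₂
    set c₁ := D2 w Complex.I Complex.I with hc₁
    have hmv' := hmv ρ hρpos hρδ
    have hexp : ∀ θ : ℝ, D1 w ((ρ:ℂ) * Complex.exp (θ * Complex.I))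
        = ρ * Real.cos θ * p1 + ρ * Real.sin θ * q1 := by
      intro θ
      rw [clm_decomp (D1 w), re_rexp, im_rexp]
      simp only [smul_eq_mul, hp1, hq1]
    have hexp2 : ∀ θ : ℝ, D2 w ((ρ:ℂ) * Complex.exp (θ * Complex.I))
          ((ρ:ℂ) * Complex.exp (θ * Complex.I))
        = ρ^2 * ((Real.cos θ)^2 * a₁ + (Real.cos θ * Real.sin θ) * (b₁ + b₂)
            + (Real.sin θ)^2 * c₁) := by
      intro θ
      rw [clm_decomp (D2 w), re_rexp, im_rexp]
      simp only [ContinuousLinearMap.add_apply, ContinuousLinearMap.coe_smul',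
        Pi.smul_apply, smul_eq_mul]
      rw [clm_decomp (D2 w 1), clm_decomp (D2 w Complex.I), re_rexp, im_rexp]
      simp only [smul_eq_mul, ha₁, hb₁, hb₂, hc₁]
      ring
    set fV : ℝ → ℝ := fun θ => V (w + ρ * Complex.exp (θ * Complex.I)) with hfV
    set g : ℝ → ℝ := fun θ => V w + (ρ * Real.cos θ * p1 + ρ * Real.sin θ * q1)
      + (1/2) * (ρ^2 * ((Real.cos θ)^2 * a₁ + (Real.cos θ * Real.sin θ) * (b₁ + b₂)
          + (Real.sin θ)^2 * c₁)) with hg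
    have hcexp : Continuous (fun θ : ℝ => w + (ρ:ℂ) * Complex.exp (θ * Complex.I)) := by
      apply continuous_const.add
      exact continuous_const.mul (Complex.continuous_exp.comp
        ((Complex.continuous_ofReal).mul continuous_const))
    have hcontV : Continuous fV := hV.continuous.comp hcexp
    have hcontg : Continuous g := by
      apply Continuous.add
      apply Continuous.add continuous_const
      · exact ((continuous_const.mul Real.continuous_cos).mul continuous_const).add
          ((continuous_const.mul Real.continuous_sin).mul continuous_const)
      · apply continuous_const.mul
        apply Continuous.mul continuous_const
        apply Continuous.add
        apply Continuous.add
        · exact ((Real.continuous_cos.pow 2).mul continuous_const)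
        · exact ((Real.continuous_cos.mul Real.continuous_sin).mul continuous_const)
        · exact ((Real.continuous_sin.pow 2).mul continuous_const)
    have hintg : (∫ θ in (0:ℝ)..(2*π), g θ)
        = 2*π * V w + (1/2) * ρ^2 * π * (a₁ + c₁) := by
      have i1 : (∫ θ in (0:ℝ)..(2*π), Real.cos θ) = 0 := by
        rw [integral_cos]; simp
      have i2 : (∫ θ in (0:ℝ)..(2*π), Real.sin θ) = 0 := by
        rw [integral_sin]; simp
      have i3 : (∫ θ in (0:ℝ)..(2*π), (Real.cos θ)^2) = π := by
        rw [integral_cos_sq]; simp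
      have i4 : (∫ θ in (0:ℝ)..(2*π), (Real.sin θ)^2) = π := by
        rw [integral_sin_sq]; simp
      have i5 := integral_cos_mul_sin
      have e1 : ∀ θ : ℝ, g θ = V w + (ρ*p1) * Real.cos θ + (ρ*q1) * Real.sin θ
          + (ρ^2*a₁/2) * (Real.cos θ)^2 + (ρ^2*(b₁+b₂)/2) * (Real.cos θ * Real.sin θ)
          + (ρ^2*c₁/2) * (Real.sin θ)^2 := by
        intro θ; simp only [hg]; ring
      simp only [e1]
      have ic : Continuous fun θ : ℝ => Real.cos θ := Real.continuous_cos
      have isn : Continuous fun θ : ℝ => Real.sin θ := Real.continuous_sin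
      rw [intervalIntegral.integral_add, intervalIntegral.integral_add,
        intervalIntegral.integral_add, intervalIntegral.integral_add,
        intervalIntegral.integral_add]
      · rw [intervalIntegral.integral_const, intervalIntegral.integral_const_mul,
          intervalIntegral.integral_const_mul, intervalIntegral.integral_const_mul,
          intervalIntegral.integral_const_mul, intervalIntegral.integral_const_mul,
          i1, i2, i3, i4, i5]
        simp; ring
      all_goals
        apply Continuous.intervalIntegrable
        fun_prop
    have hRbound : ∀ θ : ℝ, |fV θ - g θ| ≤ η/4 * ρ^2 := by
      intro θ
      have habs := abs_rexp ρ θ hρpos.le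
      have hT := hTaylor ((ρ:ℂ) * Complex.exp (θ * Complex.I)) habs
      rw [hexp θ, hexp2 θ] at hT
      have he : fV θ - g θ = V (w + (ρ:ℂ) * Complex.exp (θ * Complex.I)) - V w
          - (ρ * Real.cos θ * p1 + ρ * Real.sin θ * q1)
          - (1/2) * (ρ^2 * ((Real.cos θ)^2 * a₁ + (Real.cos θ * Real.sin θ) * (b₁ + b₂)
              + (Real.sin θ)^2 * c₁)) := by
        simp only [hfV, hg]; ring
      rw [he]
      exact hT
    have hintR : (∫ θ in (0:ℝ)..(2*π), (fV θ - g θ))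
        = -((1/2) * ρ^2 * π * (a₁ + c₁)) := by
      rw [intervalIntegral.integral_sub (hcontV.intervalIntegrable _ _)
        (hcontg.intervalIntegrable _ _)]
      rw [hintg]
      have : (∫ θ in (0:ℝ)..(2*π), fV θ) = 2*π*V w := hmv'
      rw [this]; ring
    have hnorm : |∫ θ in (0:ℝ)..(2*π), (fV θ - g θ)| ≤ (η/4 * ρ^2) * |2*π - 0| := by
      have := intervalIntegral.norm_integral_le_of_norm_le_const
        (C := η/4 * ρ^2) (f := fun θ => fV θ - g θ) (a := 0) (b := 2*π)
        (fun x _ => by rw [Real.norm_eq_abs]; exact hRbound x)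
      simpa using this
    rw [hintR] at hnorm
    have hXac : X = a₁ + c₁ := by rw [hX, ha₁, hc₁]
    rw [abs_neg] at hnorm
    have h2 : |(1/2) * ρ^2 * π * (a₁ + c₁)| = (1/2) * ρ^2 * π * |a₁ + c₁| := by
      rw [abs_mul]
      congr 1
      rw [_root_.abs_of_nonneg (by positivity)]
    rw [h2] at hnorm
    have hπ := Real.pi_pos
    have habs2π : |2*π - 0| = 2*π := by
      rw [sub_zero, _root_.abs_of_nonneg (by positivity)]
    rw [habs2π] at hnorm
    rw [hXac]
    have heq : η/4*ρ^2*(2*π) = 1/2 * ρ^2 * π * η := by ring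
    rw [heq] at hnorm
    have hpos : (0:ℝ) < 1/2 * ρ^2 * π := by positivity
    exact le_of_mul_le_mul_left hnorm hpos
  have : |X| ≤ 0 := le_of_forall_pos_le_add (by intro ε hε; simpa using key ε hε)
  have := abs_nonpos_iff.1 this
  exact this



section stepA

lemma symm_eq (p : ℝ × ℝ) :
    Complex.polarCoord.symm p = (p.1 : ℂ) * Complex.exp (p.2 * Complex.I) := by
  rw [Complex.polarCoord_symm_apply, Complex.exp_mul_I]
  push_cast
  ring

lemma normSq_rexp (ρ θ : ℝ) :
    Complex.normSq ((ρ:ℂ) * Complex.exp (θ * Complex.I)) = ρ^2 := by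
  rw [Complex.normSq_mul, Complex.normSq_ofReal, Complex.normSq_eq_norm_sq,
    Complex.norm_exp_ofReal_mul_I]
  ring

lemma radial_polar_integral {ε : ℝ} (hε : 0 < ε) (B : ContDiffBump (0:ℝ))
    (hB : B.rOut = ε^2) (w : ℂ → ℝ)
    (hq : Continuous fun t => B (Complex.normSq t) * w t) (m : ℝ)
    (hm : ∀ ρ : ℝ, 0 < ρ → ρ ≤ ε →
      (∫ θ in Ioo (-π) π, w ((ρ:ℂ) * Complex.exp (θ * Complex.I))) = m) :
    (∫ t : ℂ, B (Complex.normSq t) * w t)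
      = (∫ ρ in Ioc (0:ℝ) ε, ρ * B (ρ^2)) * m := by
  set q : ℂ → ℝ := fun t => B (Complex.normSq t) * w t with hqdef
  rw [← Complex.integral_comp_polarCoord_symm q]
  have htarget : polarCoord.target = Ioi (0:ℝ) ×ˢ Ioo (-π) π := rfl
  rw [htarget]
  simp_rw [symm_eq]
  set F : ℝ × ℝ → ℝ := fun p => p.1 • q ((p.1 : ℂ) * Complex.exp (p.2 * Complex.I)) with hFdef
  have hFcont : Continuous F := by
    apply continuous_fst.smul
    apply hq.comp
    exact (Complex.continuous_ofReal.comp continuous_fst).mul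
      (Complex.continuous_exp.comp ((Complex.continuous_ofReal.comp continuous_snd).mul
        continuous_const))
  have hsplit : Ioi (0:ℝ) = Ioc 0 ε ∪ Ioi ε := (Ioc_union_Ioi_eq_Ioi hε.le).symm
  have hF0 : ∀ p ∈ (Ioi ε) ×ˢ (Ioo (-π) π), F p = 0 := by
    rintro ⟨ρ, θ⟩ ⟨hρ, hθ⟩
    have hzero : B (Complex.normSq ((ρ:ℂ) * Complex.exp (θ * Complex.I))) = 0 := by
      apply B.zero_of_le_dist
      rw [normSq_rexp, Real.dist_eq, sub_zero, hB]
      have : ε < ρ := hρ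
      rw [_root_.abs_of_nonneg (by nlinarith)]
      nlinarith
    simp only [hFdef, hqdef, smul_eq_mul, hzero, zero_mul, mul_zero]
  have hint1 : IntegrableOn F (Ioc (0:ℝ) ε ×ˢ Ioo (-π) π) := by
    have hcomp : IsCompact (Icc (0:ℝ) ε ×ˢ Icc (-π) π) := isCompact_Icc.prod isCompact_Icc
    exact (hFcont.continuousOn.integrableOn_compact hcomp).mono_set
      (Set.prod_mono Ioc_subset_Icc_self Ioo_subset_Icc_self)
  have hint2 : IntegrableOn F (Ioi ε ×ˢ Ioo (-π) π) := by
    apply (integrableOn_zero (ε' := ℝ)).congr_fun (fun p hp => (hF0 p hp).symm)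
    exact measurableSet_Ioi.prod measurableSet_Ioo
  have hdisj : Disjoint (Ioc (0:ℝ) ε ×ˢ Ioo (-π) π) (Ioi ε ×ˢ Ioo (-π) π) := by
    rw [Set.disjoint_left]
    rintro ⟨ρ, θ⟩ ⟨h1, _⟩ ⟨h2, _⟩
    exact absurd (h2 : ε < ρ) (not_lt.2 h1.2)
  rw [hsplit, Set.union_prod, setIntegral_union hdisj (measurableSet_Ioi.prod measurableSet_Ioo)
    hint1 hint2]
  rw [setIntegral_congr_fun (measurableSet_Ioi.prod measurableSet_Ioo) hF0, integral_zero,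
    add_zero]
  rw [Measure.volume_eq_prod, setIntegral_prod F hint1]
  rw [setIntegral_congr_fun measurableSet_Ioc (g := fun ρ => (ρ * B (ρ^2)) * m)]
  · exact integral_mul_const _ _
  · intro ρ hρ
    have hval : ∀ θ : ℝ, F (ρ, θ) = (ρ * B (ρ^2)) * w ((ρ:ℂ) * Complex.exp (θ * Complex.I)) := by
      intro θ
      simp only [hFdef, hqdef, smul_eq_mul, normSq_rexp]
      ring
    simp only [hval]
    rw [MeasureTheory.integral_const_mul, hm ρ hρ.1 hρ.2]

open scoped Convolution

lemma exists_smooth_eq (z₀ : ℂ) (r : ℝ) (u : ℂ → ℝ)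
    (hcont : ContinuousOn u (ball z₀ r))
    (hbdd : ∃ M : ℝ, ∀ z ∈ ball z₀ r, |u z| ≤ M)
    (hmv : ∀ z : ℂ, ∀ ρ : ℝ, 0 < ρ → closedBall z ρ ⊆ ball z₀ r →
      u z = (1 / (2 * Real.pi)) * ∫ θ in (0:ℝ)..(2 * Real.pi),
        u (z + ρ * Complex.exp (θ * Complex.I)))
    {ε : ℝ} (hε : 0 < ε) (hεr : ε < r) :
    ∃ v : ℂ → ℝ, ContDiff ℝ ((⊤:ℕ∞)) v ∧ ∀ z ∈ ball z₀ (r - ε), u z = v z := by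
  obtain ⟨M, hM⟩ := hbdd
  set B : ContDiffBump (0:ℝ) := ⟨(ε/2)^2, ε^2, by positivity, by nlinarith⟩ with hBdef
  have hBrOut : B.rOut = ε^2 := rfl
  have hBrIn : B.rIn = (ε/2)^2 := rfl
  set φ : ℂ → ℝ := fun t => B (Complex.normSq t) with hφdef
  have hnsq : ContDiff ℝ ((⊤:ℕ∞)) (fun t : ℂ => Complex.normSq t) := by
    have h : (fun t : ℂ => Complex.normSq t) = fun t : ℂ => t.re * t.re + t.im * t.im := by
      funext t; rw [Complex.normSq_apply]
    rw [h]
    exact ((Complex.reCLM.contDiff.mul Complex.reCLM.contDiff)).add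
      (Complex.imCLM.contDiff.mul Complex.imCLM.contDiff)
  have hφsmooth : ContDiff ℝ ((⊤:ℕ∞)) φ := B.contDiff.comp hnsq
  have hφcont : Continuous φ := hφsmooth.continuous
  have hφ0 : ∀ t : ℂ, ε ≤ ‖t‖ → φ t = 0 := by
    intro t ht
    apply B.zero_of_le_dist
    rw [Real.dist_eq, sub_zero, hBrOut, _root_.abs_of_nonneg (Complex.normSq_nonneg t)]
    rw [← Complex.sq_norm]
    nlinarith [norm_nonneg t]
  have hφsupp : HasCompactSupport φ := by
    apply HasCompactSupport.intro (isCompact_closedBall (0:ℂ) ε)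
    intro t ht
    apply hφ0
    rw [mem_closedBall, Complex.dist_eq, sub_zero] at ht
    exact (not_le.1 ht).le
  -- the truncated function
  set g : ℂ → ℝ := (ball z₀ r).indicator u with hgdef
  have hgmeas : AEStronglyMeasurable g volume := by
    have h1 : AEMeasurable u (volume.restrict (ball z₀ r)) :=
      hcont.aemeasurable measurableSet_ball
    have h2 : AEMeasurable g volume := (aemeasurable_indicator_iff measurableSet_ball).2 h1
    exact h2.aestronglyMeasurable
  have hgbd : ∀ t : ℂ, ‖g t‖ ≤ max M 0 := by
    intro t
    by_cases ht : t ∈ ball z₀ r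
    · rw [hgdef, Set.indicator_of_mem ht, Real.norm_eq_abs]
      exact le_max_of_le_left (hM t ht)
    · rw [hgdef, Set.indicator_of_notMem ht]
      simp
  have hgloc : LocallyIntegrable g volume := by
    intro x
    refine ⟨closedBall x 1, closedBall_mem_nhds x one_pos, ?_⟩
    apply Measure.integrableOn_of_bounded (M := max M 0) measure_closedBall_lt_top.ne
      hgmeas
    exact Filter.Eventually.of_forall hgbd
  set v' : ℂ → ℝ := φ ⋆[ContinuousLinearMap.lsmul ℝ ℝ, volume] g with hv'def
  have hv'smooth : ContDiff ℝ ((⊤:ℕ∞)) v' :=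
    hφsupp.contDiff_convolution_left _ hφsmooth hgloc
  set c : ℝ := ∫ t : ℂ, φ t with hcdef
  set I₀ : ℝ := ∫ ρ in Set.Ioc (0:ℝ) ε, ρ * B (ρ^2) with hI₀def
  -- total integral of φ
  have hctot : c = I₀ * (2*π) := by
    have h2 := radial_polar_integral hε B hBrOut (fun _ : ℂ => (1:ℝ))
      (by simpa using hφcont) (2*π)
      (fun ρ _ _ => by
        simp only [MeasureTheory.setIntegral_const, smul_eq_mul, mul_one, Real.volume_Ioo]
        rw [Real.volume_real_Ioo_of_le (by linarith [Real.pi_pos])]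
        ring)
    calc c = ∫ t : ℂ, B (Complex.normSq t) * (1:ℝ) := by simp [hcdef, hφdef]
      _ = I₀ * (2*π) := h2
  -- value of the convolution
  have hval : ∀ z ∈ ball z₀ (r - ε), v' z = c * u z := by
    intro z hz
    have hzsub : closedBall z ε ⊆ ball z₀ r := by
      intro y hy
      rw [mem_closedBall] at hy
      rw [mem_ball] at hz ⊢
      calc dist y z₀ ≤ dist y z + dist z z₀ := dist_triangle _ _ _
        _ < ε + (r - ε) := by linarith [hz]
        _ = r := by ring
    have hcq : Continuous fun t => B (Complex.normSq t) * g (z - t) := by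
      rw [continuous_iff_continuousAt]
      intro t₀
      by_cases h : z - t₀ ∈ ball z₀ r
      · have hU : IsOpen {t : ℂ | z - t ∈ ball z₀ r} :=
          isOpen_ball.preimage (continuous_const.sub continuous_id)
        have hcu : ContinuousAt (fun t => u (z - t)) t₀ := by
          apply ContinuousAt.comp
          · exact hcont.continuousAt (isOpen_ball.mem_nhds h)
          · exact (continuous_const.sub continuous_id).continuousAt
        have hgu : (fun t => g (z - t)) =ᶠ[nhds t₀] (fun t => u (z - t)) := by
          apply Filter.eventually_of_mem (hU.mem_nhds h)
          intro t ht
          exact Set.indicator_of_mem (show z - t ∈ ball z₀ r from ht) u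
        exact (hφcont.continuousAt).mul ((hcu.congr hgu.symm))
      · have ht₀ : ε < ‖t₀‖ := by
          by_contra hc
          push_neg at hc
          apply h
          apply hzsub
          rw [mem_closedBall, Complex.dist_eq]
          simpa using hc
        have hU2 : IsOpen {t : ℂ | ε < ‖t‖} :=
          isOpen_lt continuous_const continuous_norm
        have hev : (fun t => B (Complex.normSq t) * g (z - t)) =ᶠ[nhds t₀] (fun _ => (0:ℝ)) := by
          apply Filter.eventually_of_mem (hU2.mem_nhds ht₀)
          intro t ht
          have h0 := hφ0 t (le_of_lt ht)
          simp only [hφdef] at h0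
          show B (Complex.normSq t) * g (z - t) = (0:ℝ)
          rw [h0, zero_mul]
        exact continuousAt_const.congr hev.symm
    have hcirc : ∀ ρ : ℝ, 0 < ρ → ρ ≤ ε →
        (∫ θ in Set.Ioo (-π) π, g (z - (ρ:ℂ) * Complex.exp (θ * Complex.I))) = 2*π * u z := by
      intro ρ hρ hρε
      have hmem : ∀ θ : ℝ, z - (ρ:ℂ) * Complex.exp (θ * Complex.I) ∈ ball z₀ r := by
        intro θ
        apply hzsub
        rw [mem_closedBall, Complex.dist_eq]
        have : z - (ρ:ℂ) * Complex.exp (θ * Complex.I) - z = -((ρ:ℂ) * Complex.exp (θ * Complex.I)) := by ring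
        rw [this, norm_neg]
        rw [norm_mul, Complex.norm_real, Complex.norm_exp_ofReal_mul_I, mul_one, Real.norm_eq_abs,
          _root_.abs_of_nonneg hρ.le]
        exact hρε
      have hgu : ∀ θ : ℝ, g (z - (ρ:ℂ) * Complex.exp (θ * Complex.I))
          = u (z - (ρ:ℂ) * Complex.exp (θ * Complex.I)) := fun θ =>
        Set.indicator_of_mem (hmem θ) u
      simp_rw [hgu]
      -- convert to interval integral and shift
      have hneg : ∀ θ : ℝ, z - (ρ:ℂ) * Complex.exp (θ * Complex.I)
          = z + (ρ:ℂ) * Complex.exp ((((θ + π) : ℝ) : ℂ) * Complex.I) := by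
        intro θ
        have h1 : Complex.exp ((((θ + π) : ℝ) : ℂ) * Complex.I)
            = -Complex.exp ((θ:ℝ) * Complex.I) := by
          push_cast
          rw [add_mul, Complex.exp_add, Complex.exp_pi_mul_I]
          ring
        rw [h1]; ring
      calc (∫ θ in Set.Ioo (-π) π, u (z - (ρ:ℂ) * Complex.exp (θ * Complex.I)))
          = ∫ θ in Set.Ioc (-π) π, u (z - (ρ:ℂ) * Complex.exp (θ * Complex.I)) :=
            integral_Ioc_eq_integral_Ioo.symm
        _ = ∫ θ in (-π)..π, u (z - (ρ:ℂ) * Complex.exp (θ * Complex.I)) :=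
            (intervalIntegral.integral_of_le (by linarith [Real.pi_pos])).symm
        _ = ∫ θ in (-π)..π, u (z + (ρ:ℂ) * Complex.exp ((((θ + π):ℝ):ℂ) * Complex.I)) := by
            apply intervalIntegral.integral_congr
            intro θ _
            exact congrArg u (hneg θ)
        _ = ∫ θ in (-π + π)..(π + π), u (z + (ρ:ℂ) * Complex.exp (θ * Complex.I)) :=
            intervalIntegral.integral_comp_add_right
              (fun x : ℝ => u (z + (ρ:ℂ) * Complex.exp ((x:ℂ) * Complex.I))) π
        _ = ∫ θ in (0:ℝ)..(2*π), u (z + (ρ:ℂ) * Complex.exp (θ * Complex.I)) := by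
            norm_num [two_mul]
        _ = 2*π * u z := by
            have := hmv z ρ hρ (fun y hy => hzsub (closedBall_subset_closedBall hρε hy))
            rw [this]
            have h2π : (2*π) ≠ 0 := by positivity
            field_simp
            simp only [mul_comm Complex.I]
    have hconv : v' z = ∫ t : ℂ, B (Complex.normSq t) * g (z - t) := by
      rw [hv'def, convolution_def]
      simp only [ContinuousLinearMap.lsmul_apply, smul_eq_mul, hφdef]
    have hr := radial_polar_integral hε B hBrOut (fun t => g (z - t)) hcq (2*π*u z) hcirc
    calc v' z = ∫ t : ℂ, B (Complex.normSq t) * g (z - t) := hconv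
      _ = I₀ * (2*π*u z) := hr
      _ = c * u z := by rw [hctot]; ring
  -- positivity of c
  have hcpos : 0 < c := by
    have hφint : Integrable φ volume := hφcont.integrable_of_hasCompactSupport hφsupp
    have hone : ∀ t ∈ closedBall (0:ℂ) (ε/2), (1:ℝ) ≤ φ t := by
      intro t ht
      rw [mem_closedBall, Complex.dist_eq, sub_zero] at ht
      have : φ t = 1 := by
        apply B.one_of_mem_closedBall
        rw [mem_closedBall, Real.dist_eq, sub_zero, hBrIn,
          _root_.abs_of_nonneg (Complex.normSq_nonneg t), ← Complex.sq_norm]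
        nlinarith [norm_nonneg t]
      rw [this]
    have hμpos : 0 < (volume (closedBall (0:ℂ) (ε/2))).toReal := by
      apply ENNReal.toReal_pos
      · exact (measure_closedBall_pos volume 0 (by positivity)).ne'
      · exact measure_closedBall_lt_top.ne
    calc (0:ℝ) < (volume (closedBall (0:ℂ) (ε/2))).toReal := hμpos
      _ = ∫ _ in closedBall (0:ℂ) (ε/2), (1:ℝ) := by
          rw [setIntegral_const]; simp [Measure.real]
      _ ≤ ∫ t in closedBall (0:ℂ) (ε/2), φ t := by
          apply setIntegral_mono_on
          · exact integrableOn_const measure_closedBall_lt_top.ne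
          · exact hφint.integrableOn
          · exact measurableSet_closedBall
          · exact hone
      _ ≤ ∫ t : ℂ, φ t := by
          apply setIntegral_le_integral hφint
          exact Filter.Eventually.of_forall (fun t => B.nonneg)
  refine ⟨fun z => c⁻¹ * v' z, contDiff_const.mul hv'smooth, ?_⟩
  intro z hz
  show u z = c⁻¹ * v' z
  rw [hval z hz, ← mul_assoc, inv_mul_cancel₀ hcpos.ne', one_mul]

end stepA

lemma grade_le {n : ℕ∞} : ((n : WithTop ℕ∞)) ≤ ((⊤:ℕ∞) : WithTop ℕ∞) :=
  WithTop.coe_le_coe.2 le_top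

theorem harmonic_of_mean_value (z₀ : ℂ) (r : ℝ) (hr : 0 < r) (u : ℂ → ℝ)
    (hcont : ContinuousOn u (ball z₀ r))
    (hbdd : ∃ M : ℝ, ∀ z ∈ ball z₀ r, |u z| ≤ M)
    (hmv : ∀ z : ℂ, ∀ ρ : ℝ, 0 < ρ → closedBall z ρ ⊆ ball z₀ r →
      u z = (1 / (2 * Real.pi)) * ∫ θ in (0:ℝ)..(2 * Real.pi),
        u (z + ρ * Complex.exp (θ * Complex.I))) :
    HarmonicOnSet u (ball z₀ r) := by
  have key : ∀ z ∈ ball z₀ r, ∃ ε > 0, ε < r ∧ z ∈ ball z₀ (r - ε) := by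
    intro z hz
    have hd : dist z z₀ < r := mem_ball.1 hz
    have hd0 : 0 ≤ dist z z₀ := dist_nonneg
    refine ⟨(r - dist z z₀)/2, by linarith, by linarith, ?_⟩
    rw [mem_ball]
    linarith
  constructor
  · -- smoothness
    apply contDiffOn_of_locally_contDiffOn
    intro z hz
    obtain ⟨ε, hεpos, hεr, hzin⟩ := key z hz
    obtain ⟨v, hv, huv⟩ := exists_smooth_eq z₀ r u hcont hbdd hmv hεpos hεr
    refine ⟨ball z₀ (r - ε), isOpen_ball, hzin, ?_⟩
    exact ((hv.of_le grade_le).contDiffOn.mono Set.inter_subset_right).congr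
      (fun x hx => huv x hx.2)
  · -- vanishing laplacian
    intro z hz
    obtain ⟨ε, hεpos, hεr, hzin⟩ := key z hz
    obtain ⟨v, hv, huv⟩ := exists_smooth_eq z₀ r u hcont hbdd hmv hεpos hεr
    have hopen : IsOpen (ball z₀ (r - ε)) := isOpen_ball
    have hfd : ∀ y ∈ ball z₀ (r - ε), fderiv ℝ u y = fderiv ℝ v y := by
      intro y hy
      apply Filter.EventuallyEq.fderiv_eq
      exact Filter.eventually_of_mem (hopen.mem_nhds hy) (fun x hx => huv x hx)
    have hlapeq : laplacian u z = laplacian v z := by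
      have h1 : (fun y => fderiv ℝ u y 1) =ᶠ[nhds z] (fun y => fderiv ℝ v y 1) :=
        Filter.eventually_of_mem (hopen.mem_nhds hzin) (fun y hy => by
          show fderiv ℝ u y 1 = fderiv ℝ v y 1
          rw [hfd y hy])
      have h2 : (fun y => fderiv ℝ u y Complex.I) =ᶠ[nhds z]
          (fun y => fderiv ℝ v y Complex.I) :=
        Filter.eventually_of_mem (hopen.mem_nhds hzin) (fun y hy => by
          show fderiv ℝ u y Complex.I = fderiv ℝ v y Complex.I
          rw [hfd y hy])
      unfold laplacian
      rw [h1.fderiv_eq, h2.fderiv_eq]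
    rw [hlapeq]
    have hdz : dist z z₀ < r - ε := mem_ball.1 hzin
    set δ := (r - ε - dist z z₀)/2 with hδdef
    have hδpos : 0 < δ := by rw [hδdef]; linarith
    apply lap_zero v (hv.of_le grade_le) z δ hδpos
    intro ρ hρ hρδ
    have hmem : ∀ θ : ℝ, z + (ρ:ℂ) * Complex.exp (θ * Complex.I) ∈ ball z₀ (r - ε) := by
      intro θ
      rw [mem_ball]
      have habs : dist (z + (ρ:ℂ) * Complex.exp (θ * Complex.I)) z = ρ := by
        rw [Complex.dist_eq]
        have h0 : z + (ρ:ℂ) * Complex.exp (θ * Complex.I) - z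
            = (ρ:ℂ) * Complex.exp (θ * Complex.I) := by ring
        rw [h0, norm_mul, Complex.norm_real, Complex.norm_exp_ofReal_mul_I, mul_one,
          Real.norm_eq_abs, _root_.abs_of_nonneg hρ.le]
      calc dist (z + (ρ:ℂ) * Complex.exp (θ * Complex.I)) z₀
          ≤ dist (z + (ρ:ℂ) * Complex.exp (θ * Complex.I)) z + dist z z₀ :=
            dist_triangle _ _ _
        _ = ρ + dist z z₀ := by rw [habs]
        _ < r - ε := by rw [hδdef] at hρδ; linarith
    have hball : closedBall z ρ ⊆ ball z₀ r := by
      intro y hy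
      rw [mem_closedBall] at hy
      rw [mem_ball]
      calc dist y z₀ ≤ dist y z + dist z z₀ := dist_triangle _ _ _
        _ ≤ ρ + dist z z₀ := by linarith
        _ < r := by rw [hδdef] at hρδ; linarith
    have hsub : ball z₀ (r - ε) ⊆ ball z₀ r :=
      ball_subset_ball (by linarith)
    calc (∫ θ in (0:ℝ)..(2*π), v (z + (ρ:ℂ) * Complex.exp (θ * Complex.I)))
        = ∫ θ in (0:ℝ)..(2*π), u (z + (ρ:ℂ) * Complex.exp (θ * Complex.I)) := by
          apply intervalIntegral.integral_congr
          intro θ _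
          exact (huv _ (hmem θ)).symm
      _ = 2*π * u z := by
          have := hmv z ρ hρ hball
          rw [this]
          field_simp
          simp only [mul_comm Complex.I]
      _ = 2*π * v z := by rw [huv z hzin]
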